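/- arXiv:2110.09652 — 3 statements merged into one kernel-verified Lean document; each statement's English description precedes it below -/
import Mathlib

section
/- The double integral over the unit square of 1/((1+u)(1+v)(1+uv)) with respect to u and v equals π²/24. -/
set_option maxHeartbeats 1000000
open Real Filter MeasureTheory intervalIntegral Set Topology Finset


theorem evenzeta2 : HasSum (fun n : ℕ => (1:ℝ) / (2*(n:ℝ))^2) (Real.pi^2/24) := by
  have h := hasSum_zeta_two.mul_left (1/4)
  have e : (fun n : ℕ => (1:ℝ)/4 * (1/(n:ℝ)^2)) = fun n : ℕ => (1:ℝ) / (2*(n:ℝ))^2 := by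
    funext n; ring
  rw [e] at h
  convert h using 1; rfl; ring

theorem oddzeta2 : HasSum (fun n : ℕ => (1:ℝ) / (2*(n:ℝ)+1)^2) (Real.pi^2/8) := by
  have hinj : Function.Injective (fun n : ℕ => 2*n+1) := fun a b hab => by
    simp only [] at hab; omega
  have hsumodd : Summable (fun n : ℕ => (1:ℝ) / (2*(n:ℝ)+1)^2) := by
    have h2 := hasSum_zeta_two.summable.comp_injective hinj
    have e : ((fun n : ℕ => (1:ℝ)/(n:ℝ)^2) ∘ fun n : ℕ => 2*n+1)
        = fun n : ℕ => (1:ℝ) / (2*(n:ℝ)+1)^2 := by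
      funext n; simp only [Function.comp]; push_cast; ring_nf
    rwa [e] at h2
  have he : HasSum (fun k : ℕ => (1:ℝ)/((2*k:ℕ):ℝ)^2) (Real.pi^2/24) := by
    have h := evenzeta2
    have e : (fun n : ℕ => (1:ℝ) / (2*(n:ℝ))^2) = fun k : ℕ => (1:ℝ)/((2*k:ℕ):ℝ)^2 := by
      funext n; push_cast; ring
    rwa [e] at h
  have ho : HasSum (fun k : ℕ => (1:ℝ)/((2*k+1:ℕ):ℝ)^2)
      (∑' k : ℕ, (1:ℝ)/((2*k+1:ℕ):ℝ)^2) := by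
    have h := hsumodd.hasSum
    have e : (fun n : ℕ => (1:ℝ) / (2*(n:ℝ)+1)^2) = fun k : ℕ => (1:ℝ)/((2*k+1:ℕ):ℝ)^2 := by
      funext n; push_cast; ring
    rw [e] at h; exact h.summable.hasSum
  have htot := HasSum.even_add_odd (f := fun n : ℕ => (1:ℝ)/(n:ℝ)^2) he ho
  have huniq := hasSum_zeta_two.unique htot
  have hval : (∑' k : ℕ, (1:ℝ)/((2*k+1:ℕ):ℝ)^2) = Real.pi^2/8 := by linarith
  have h := hsumodd.hasSum
  have e : (fun n : ℕ => (1:ℝ) / (2*(n:ℝ)+1)^2) = fun k : ℕ => (1:ℝ)/((2*k+1:ℕ):ℝ)^2 := by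
    funext n; push_cast; ring
  rw [e] at h; rw [hval] at h; rwa [e]

theorem altzeta2 : HasSum (fun n : ℕ => (-1:ℝ)^n / (2*((n:ℝ)+1)^2)) (Real.pi^2/24) := by
  have he : HasSum (fun k : ℕ => (-1:ℝ)^(2*k) / (2*(((2*k:ℕ):ℝ)+1)^2)) (Real.pi^2/16) := by
    have h := oddzeta2.mul_left (1/2)
    have e : (fun n : ℕ => (1:ℝ)/2 * (1/(2*(n:ℝ)+1)^2))
        = fun k : ℕ => (-1:ℝ)^(2*k) / (2*(((2*k:ℕ):ℝ)+1)^2) := by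
      funext k
      have hp : (2*(k:ℝ)+1) ≠ 0 := by positivity
      rw [Even.neg_one_pow (even_two_mul k)]; push_cast; field_simp; try ring
    rw [e] at h
    convert h using 1; rfl; ring
  have ho : HasSum (fun k : ℕ => (-1:ℝ)^(2*k+1) / (2*(((2*k+1:ℕ):ℝ)+1)^2)) (-(Real.pi^2/48)) := by
    have h0 : HasSum (fun n : ℕ => (1:ℝ) / (2*((n:ℝ)+1))^2) (Real.pi^2/24) := by
      have h := (hasSum_nat_add_iff (f := fun n : ℕ => (1:ℝ)/(2*(n:ℝ))^2) 1 (g := Real.pi^2/24)).2 ?_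
      · have e : (fun n : ℕ => (1:ℝ)/(2*((n+1:ℕ):ℝ))^2)
            = fun n : ℕ => (1:ℝ) / (2*((n:ℝ)+1))^2 := by
          funext n; push_cast; ring
        rwa [e] at h
      · convert evenzeta2 using 1; rfl; norm_num
    have h := h0.mul_left (-(1/2))
    have e : (fun n : ℕ => -(1:ℝ)/2 * (1/(2*((n:ℝ)+1))^2))
        = fun k : ℕ => (-1:ℝ)^(2*k+1) / (2*(((2*k+1:ℕ):ℝ)+1)^2) := by
      funext k
      have hp : ((k:ℝ)+1) ≠ 0 := by positivity
      rw [Odd.neg_one_pow ⟨k, by ring⟩]; push_cast; field_simp; try ring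
    rw [show (-(1/2) : ℝ) = -1/2 by norm_num, e] at h
    convert h using 1; rfl; ring
  have htot := HasSum.even_add_odd (f := fun n : ℕ => (-1:ℝ)^n / (2*((n:ℝ)+1)^2)) he ho
  convert htot using 1; ring



theorem inner_int {u : ℝ} (hu0 : 0 ≤ u) (hu1 : u < 1) :
    ∫ v in (0:ℝ)..1, 1 / ((1 + u) * (1 + v) * (1 + u * v))
      = (Real.log 2 - Real.log (1 + u)) / ((1 + u) * (1 - u)) := by
  have hu : (0:ℝ) < 1 + u := by linarith
  have hu' : (0:ℝ) < 1 - u := by linarith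
  have key : ∀ v ∈ Set.uIcc (0:ℝ) 1,
      HasDerivAt (fun v => (Real.log (1 + v) - Real.log (1 + u * v)) / ((1 + u) * (1 - u)))
        (1 / ((1 + u) * (1 + v) * (1 + u * v))) v := by
    intro v hv
    rw [Set.uIcc_of_le (by norm_num : (0:ℝ) ≤ 1)] at hv
    have hv0 : 0 ≤ v := hv.1
    have h1v : (0:ℝ) < 1 + v := by linarith
    have huv : (0:ℝ) < 1 + u * v := by nlinarith
    have h1 : HasDerivAt (fun v : ℝ => Real.log (1 + v)) (1 / (1 + v)) v := by
      have := ((hasDerivAt_id v).const_add 1).log h1v.ne'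
      simpa using this
    have h2 : HasDerivAt (fun v : ℝ => Real.log (1 + u * v)) (u / (1 + u * v)) v := by
      have := (((hasDerivAt_id v).const_mul u).const_add 1).log huv.ne'
      simpa using this
    have h3 := (h1.sub h2).div_const ((1 + u) * (1 - u))
    convert h3 using 1; rfl; rfl; rfl
    field_simp
    ring
  have hcont : ContinuousOn (fun v => 1 / ((1 + u) * (1 + v) * (1 + u * v)))
      (Set.uIcc (0:ℝ) 1) := by
    apply ContinuousOn.div continuousOn_const
    · fun_prop
    · intro v hv
      rw [Set.uIcc_of_le (by norm_num : (0:ℝ) ≤ 1)] at hv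
      have huv : (0:ℝ) < 1 + u * v := by nlinarith [hv.1]
      have h1v : (0:ℝ) < 1 + v := by linarith [hv.1]
      positivity
  have := intervalIntegral.integral_eq_sub_of_hasDerivAt key (hcont.intervalIntegrable)
  rw [this]
  simp [Real.log_one]
  rw [show (1:ℝ) + 1 = 2 by norm_num]


noncomputable def gg (t : ℝ) : ℝ := if t = 0 then 1/2 else Real.log (1 + t) / (2 * t)

theorem gg_contOn : ContinuousOn gg (Set.Icc (0:ℝ) 1) := by
  intro x hx
  rcases eq_or_ne x 0 with rfl | hx0
  · -- continuity at 0 within Icc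
    rw [← continuousWithinAt_diff_self]
    have hL : HasDerivAt (fun t : ℝ => Real.log (1 + t)) 1 0 := by
      have := ((hasDerivAt_id (0:ℝ)).const_add 1).log (by norm_num)
      simpa using this
    have hslope := hasDerivAt_iff_tendsto_slope.mp hL
    have h2 : Tendsto (fun t : ℝ => Real.log (1 + t) / t / 2) (𝓝[≠] (0:ℝ)) (𝓝 (1/2)) := by
      have := hslope.div_const 2
      refine this.congr' ?_
      filter_upwards [self_mem_nhdsWithin] with t ht
      simp [slope_def_field, Real.log_one]
    have hmono : 𝓝[Set.Icc (0:ℝ) 1 \ {0}] (0:ℝ) ≤ 𝓝[≠] (0:ℝ) :=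
      nhdsWithin_mono 0 (fun t ht => ht.2)
    have h3 : Tendsto gg (𝓝[Set.Icc (0:ℝ) 1 \ {0}] (0:ℝ)) (𝓝 (1/2)) := by
      refine ((h2.mono_left hmono).congr' ?_)
      filter_upwards [self_mem_nhdsWithin] with t ht
      have : t ≠ 0 := ht.2
      simp only [gg, if_neg this]
      rw [div_div]
      ring_nf
    have : gg 0 = 1/2 := by simp [gg]
    unfold ContinuousWithinAt
    rw [this]
    exact h3
  · have hc : ContinuousAt (fun t : ℝ => Real.log (1 + t) / (2 * t)) x := by
      have hx1 : (0:ℝ) < x := lt_of_le_of_ne hx.1 (Ne.symm hx0)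
      apply ContinuousAt.div
      · exact (Real.continuousAt_log (by linarith)).comp (by fun_prop)
      · fun_prop
      · simpa using hx0
    have : ContinuousAt gg x := by
      refine hc.congr ?_
      filter_upwards [isOpen_ne.mem_nhds hx0] with t ht
      simp [gg, if_neg ht]
    exact this.continuousWithinAt

theorem subst_step :
    (∫ u in (0:ℝ)..1, (-2/(1+u)^2) • gg ((1-u)/(1+u))) = - ∫ t in (0:ℝ)..1, gg t := by
  have h := intervalIntegral.integral_comp_smul_deriv' (a := 0) (b := 1)
    (f := fun u => (1-u)/(1+u)) (f' := fun u => -2/(1+u)^2) (g := gg) ?_ ?_ ?_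
  · have h0 : ((1:ℝ)-0)/(1+0) = 1 := by norm_num
    have h1 : ((1:ℝ)-1)/(1+1) = 0 := by norm_num
    rw [h0, h1] at h
    exact h.trans (intervalIntegral.integral_symm 0 1)
  · intro x hx
    rw [Set.uIcc_of_le (by norm_num : (0:ℝ) ≤ 1)] at hx
    have hx1 : (0:ℝ) < 1 + x := by linarith [hx.1]
    have hd := ((hasDerivAt_id x).const_sub 1).div ((hasDerivAt_id x).const_add 1) hx1.ne'
    convert hd using 1; rfl; rfl; rfl
    simp only [id]; field_simp
    ring
  · apply ContinuousOn.div continuousOn_const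
    · fun_prop
    · intro x hx
      rw [Set.uIcc_of_le (by norm_num : (0:ℝ) ≤ 1)] at hx
      have : (0:ℝ) < 1 + x := by linarith [hx.1]
      positivity
  · apply gg_contOn.mono
    rintro t ⟨x, hx, rfl⟩
    rw [Set.uIcc_of_le (by norm_num : (0:ℝ) ≤ 1)] at hx
    have h1 : (0:ℝ) < 1 + x := by linarith [hx.1]
    constructor
    · apply div_nonneg (by linarith [hx.2]) h1.le
    · rw [div_le_one h1]; linarith [hx.1]

theorem gg_int : ∫ t in (0:ℝ)..1, gg t = Real.pi^2/24 := by
  set F : ℕ → ℝ → ℝ := fun N t => ∑ n ∈ Finset.range N, (-1)^n * (t^n / (2*((n:ℝ)+1))) with hF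
  have hFcont : ∀ N, Continuous (F N) := by
    intro N
    apply continuous_finset_sum
    intro n _
    fun_prop
  have hDCT : Tendsto (fun N => ∫ t in (0:ℝ)..1, F N t) atTop (𝓝 (∫ t in (0:ℝ)..1, gg t)) := by
    apply intervalIntegral.tendsto_integral_filter_of_dominated_convergence (bound := fun _ => 1)
    · exact Eventually.of_forall fun N => (hFcont N).aestronglyMeasurable
    · refine Eventually.of_forall fun N => ae_of_all _ fun x hx => ?_
      rw [Set.uIoc_of_le (by norm_num : (0:ℝ) ≤ 1)] at hx
      have hx0 : 0 < x := hx.1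
      have hx1 : x ≤ 1 := hx.2
      set a : ℕ → ℝ := fun n => x^n / (2*((n:ℝ)+1)) with ha
      have ha_nonneg : ∀ n, 0 ≤ a n := fun n => by positivity
      have ha_le : ∀ n, a n ≤ 1/2 := by
        intro n
        have h1 : x^n ≤ 1 := pow_le_one₀ hx0.le hx1
        have h2 : (2:ℝ) ≤ 2*((n:ℝ)+1) := by
          have : (0:ℝ) ≤ n := Nat.cast_nonneg n
          nlinarith
        calc a n ≤ 1 / (2*((n:ℝ)+1)) := by
              apply div_le_div_of_nonneg_right h1 ?_ |>.trans_eq rfl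
              · positivity
             _ ≤ 1/2 := by
              apply one_div_le_one_div_of_le (by norm_num) h2
      have ha_anti : Antitone a := by
        intro m n hmn
        have h1 : x^n ≤ x^m := pow_le_pow_of_le_one hx0.le hx1 hmn
        have h2 : (0:ℝ) < 2*((m:ℝ)+1) := by positivity
        have h3 : 2*((m:ℝ)+1) ≤ 2*((n:ℝ)+1) := by
          have : (m:ℝ) ≤ n := Nat.cast_le.mpr hmn
          linarith
        exact div_le_div₀ (by positivity) h1 h2 h3
      have ha0 : Tendsto a atTop (𝓝 0) := by
        apply squeeze_zero ha_nonneg (g := fun n : ℕ => 1/((n:ℝ)+1)) (fun n => ?_)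
          tendsto_one_div_add_atTop_nhds_zero_nat
        have h1 : x^n ≤ 1 := pow_le_one₀ hx0.le hx1
        have h2 : ((n:ℝ)+1) ≤ 2*((n:ℝ)+1) := by nlinarith [Nat.cast_nonneg (α := ℝ) n]
        calc a n ≤ 1 / (2*((n:ℝ)+1)) := by
              apply div_le_div_of_nonneg_right h1 (by positivity) |>.trans_eq rfl
             _ ≤ 1/((n:ℝ)+1) := one_div_le_one_div_of_le (by positivity) h2
      obtain ⟨l, hl⟩ := ha_anti.tendsto_alternating_series_of_tendsto_zero ha0
      have hl0 : 0 ≤ l := by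
        have := Antitone.alternating_series_le_tendsto hl ha_anti 0
        simpa using this
      have hl12 : l ≤ 1/2 := by
        have := Antitone.tendsto_le_alternating_series hl ha_anti 0
        simpa [ha] using this
      have hFa : ∀ M, F M x = ∑ i ∈ Finset.range M, (-1:ℝ)^i * a i := fun M => rfl
      rw [Real.norm_eq_abs, abs_le, hFa]
      rcases Nat.even_or_odd N with ⟨k, hk⟩ | ⟨k, hk⟩
      · subst hk
        have hk2 : k + k = 2 * k := by ring
        rw [hk2]
        have hub : ∑ i ∈ Finset.range (2*k), (-1:ℝ)^i * a i ≤ l :=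
          Antitone.alternating_series_le_tendsto hl ha_anti k
        have hlbnd : l ≤ ∑ i ∈ Finset.range (2*k+1), (-1:ℝ)^i * a i :=
          Antitone.tendsto_le_alternating_series hl ha_anti k
        rw [Finset.sum_range_succ] at hlbnd
        have hev : ((-1:ℝ))^(2*k) = 1 := by
          rw [pow_mul]; norm_num
        rw [hev, one_mul] at hlbnd
        constructor
        · have := ha_le (2*k)
          linarith
        · linarith
      · subst hk
        have hub : l ≤ ∑ i ∈ Finset.range (2*k+1), (-1:ℝ)^i * a i :=
          Antitone.tendsto_le_alternating_series hl ha_anti k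
        have hlbnd : ∑ i ∈ Finset.range (2*k), (-1:ℝ)^i * a i ≤ l :=
          Antitone.alternating_series_le_tendsto hl ha_anti k
        have hsucc : ∑ i ∈ Finset.range (2*k+1), (-1:ℝ)^i * a i
            = (∑ i ∈ Finset.range (2*k), (-1:ℝ)^i * a i) + a (2*k) := by
          rw [Finset.sum_range_succ, pow_mul]; norm_num
        constructor
        · linarith
        · have := ha_le (2*k)
          linarith
    · exact intervalIntegrable_const
    · have hne : ∀ᵐ x : ℝ, x ≠ 1 := by
        refine ae_iff.2 ?_
        simp only [ne_eq, not_not]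
        rw [show {x : ℝ | x = 1} = {1} from Set.setOf_eq_eq_singleton]
        exact measure_singleton 1
      filter_upwards [hne] with x hx1 hx
      rw [Set.uIoc_of_le (by norm_num : (0:ℝ) ≤ 1)] at hx
      have hx0 : 0 < x := hx.1
      have hxlt : x < 1 := lt_of_le_of_ne hx.2 hx1
      have habs : |(-x)| < 1 := by rw [abs_neg, abs_of_pos hx0]; exact hxlt
      have hs := hasSum_pow_div_log_of_abs_lt_one habs
      rw [sub_neg_eq_add] at hs
      have h' := hs.mul_left (-1/(2*x))
      have e : (fun n : ℕ => -1/(2*x) * ((-x)^(n+1)/((n:ℝ)+1)))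
          = fun n : ℕ => (-1:ℝ)^n * (x^n / (2*((n:ℝ)+1))) := by
        funext n
        rw [show (-x)^(n+1) = (-1:ℝ)^(n+1) * x^(n+1) by rw [neg_pow], pow_succ]
        have h1 : ((n:ℝ)+1) ≠ 0 := by positivity
        field_simp
        ring
      rw [e] at h'
      have hval : -1/(2*x) * -Real.log (1+x) = gg x := by
        simp only [gg, if_neg hx0.ne']
        field_simp
      rw [hval] at h'
      exact h'.tendsto_sum_nat
  have hcomp : ∀ N, (∫ t in (0:ℝ)..1, F N t) = ∑ n ∈ Finset.range N, (-1:ℝ)^n / (2*((n:ℝ)+1)^2) := by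
    intro N
    rw [hF]
    rw [intervalIntegral.integral_finset_sum]
    · apply Finset.sum_congr rfl
      intro n _
      have e : (fun t : ℝ => (-1:ℝ)^n * (t^n / (2*((n:ℝ)+1))))
          = fun t : ℝ => ((-1:ℝ)^n / (2*((n:ℝ)+1))) * t^n := by
        funext t; ring
      rw [e, intervalIntegral.integral_const_mul, integral_pow]
      have h1 : ((n:ℝ)+1) ≠ 0 := by positivity
      field_simp
      ring
    · intro n _
      exact (by fun_prop : Continuous fun t : ℝ => (-1:ℝ)^n * (t^n / (2*((n:ℝ)+1)))).intervalIntegrable _ _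
  have hsum := altzeta2.tendsto_sum_nat
  rw [funext hcomp] at hDCT
  exact tendsto_nhds_unique hDCT hsum


theorem double_integral_unit_square :
    ∫ u in (0:ℝ)..1, ∫ v in (0:ℝ)..1, 1 / ((1 + u) * (1 + v) * (1 + u * v))
      = Real.pi ^ 2 / 24 := by
  have hne : ∀ᵐ u : ℝ, u ≠ 1 := by
    refine ae_iff.2 ?_
    simp only [ne_eq, not_not]
    rw [show {x : ℝ | x = 1} = {1} from Set.setOf_eq_eq_singleton]
    exact measure_singleton 1
  have hae : ∀ᵐ u : ℝ, u ∈ Set.uIoc (0:ℝ) 1 →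
      (∫ v in (0:ℝ)..1, 1 / ((1 + u) * (1 + v) * (1 + u * v)))
        = -((-2/(1+u)^2) • gg ((1-u)/(1+u))) := by
    filter_upwards [hne] with u hu1 hu
    rw [Set.uIoc_of_le (by norm_num : (0:ℝ) ≤ 1)] at hu
    have hu0 : 0 < u := hu.1
    have hult : u < 1 := lt_of_le_of_ne hu.2 hu1
    rw [inner_int hu0.le hult]
    have h1u : (0:ℝ) < 1 + u := by linarith
    have h1u' : (0:ℝ) < 1 - u := by linarith
    have hs0 : (0:ℝ) < (1-u)/(1+u) := div_pos h1u' h1u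
    have hgs : gg ((1-u)/(1+u)) = (Real.log 2 - Real.log (1+u)) / (2 * ((1-u)/(1+u))) := by
      simp only [gg, if_neg hs0.ne']
      have he : 1 + (1-u)/(1+u) = 2/(1+u) := by field_simp; ring
      rw [he, Real.log_div (by norm_num) h1u.ne']
    rw [hgs, smul_eq_mul]
    field_simp
  rw [intervalIntegral.integral_congr_ae hae, intervalIntegral.integral_neg, subst_step,
    neg_neg, gg_int]
end

section
/- For every integer k ≥ 1 and positive real numbers m ranging over [1,k], the finite sum ∑_{1 ≤ m₁,m₂,m₃ ≤ k} 1/((m₁+m₂)(m₂+m₃)(m₃+m₁)) equals (1/2)·(∑_{1≤m≤k} 1/m)³ − (3/2)·∑_{1 ≤ m₁,m₂,m₃ ≤ k} 1/(m₂(m₁+m₂)(m₂+m₃)). -/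
lemma key_alg (a b c : ℝ) (ha : 0 < a) (hb : 0 < b) (hc : 0 < c) :
    (1 : ℝ) / ((a + b) * (b + c) * (c + a))
      = (1/2) * (1/a * (1/b) * (1/c))
        - ((1/2) * (1 / (b * (a + b) * (b + c))) + (1/2) * (1 / (c * (b + c) * (c + a)))
            + (1/2) * (1 / (a * (c + a) * (a + b)))) := by
  have hab : 0 < a + b := by linarith
  have hbc : 0 < b + c := by linarith
  have hca : 0 < c + a := by linarith
  field_simp
  ring

theorem triple_sum_decomposition (k : ℕ) (hk : 1 ≤ k) :
    ∑ m₁ ∈ Finset.Icc 1 k, ∑ m₂ ∈ Finset.Icc 1 k, ∑ m₃ ∈ Finset.Icc 1 k,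
        (1 : ℝ) / ((m₁ + m₂) * (m₂ + m₃) * (m₃ + m₁))
      = (1 / 2) * (∑ m ∈ Finset.Icc 1 k, (1 : ℝ) / m) ^ 3
        - (3 / 2) * ∑ m₁ ∈ Finset.Icc 1 k, ∑ m₂ ∈ Finset.Icc 1 k, ∑ m₃ ∈ Finset.Icc 1 k,
            (1 : ℝ) / (m₂ * (m₁ + m₂) * (m₂ + m₃)) := by
  set I := Finset.Icc 1 k with hI
  have hpos : ∀ m ∈ I, (0 : ℝ) < (m : ℝ) := by
    intro m hm
    rw [hI, Finset.mem_Icc] at hm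
    exact_mod_cast Nat.lt_of_lt_of_le Nat.zero_lt_one hm.1
  -- cyclic reindexing
  have cyc : ∀ g : ℕ → ℕ → ℕ → ℝ,
      (∑ a ∈ I, ∑ b ∈ I, ∑ c ∈ I, g b c a)
        = ∑ a ∈ I, ∑ b ∈ I, ∑ c ∈ I, g a b c := by
    intro g
    rw [Finset.sum_comm]
    exact Finset.sum_congr rfl fun b _ => Finset.sum_comm
  -- cube expansion
  have cube : (∑ m ∈ I, (1 : ℝ) / m) ^ 3
      = ∑ a ∈ I, ∑ b ∈ I, ∑ c ∈ I, (1 : ℝ)/a * (1/b) * (1/c) := by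
    rw [pow_succ, pow_two, Finset.sum_mul_sum, Finset.sum_mul]
    refine Finset.sum_congr rfl fun a _ => ?_
    rw [Finset.sum_mul]
    refine Finset.sum_congr rfl fun b _ => ?_
    rw [Finset.mul_sum]
  -- pointwise rewrite
  have step : ∑ a ∈ I, ∑ b ∈ I, ∑ c ∈ I,
      (1 : ℝ) / ((a + b) * (b + c) * (c + a))
      = ∑ a ∈ I, ∑ b ∈ I, ∑ c ∈ I,
        ((1/2) * ((1:ℝ)/a * (1/b) * (1/c))
          - ((1/2) * (1 / ((b:ℝ) * (a + b) * (b + c))) + (1/2) * (1 / ((c:ℝ) * (b + c) * (c + a)))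
              + (1/2) * (1 / ((a:ℝ) * (c + a) * (a + b))))) := by
    refine Finset.sum_congr rfl fun a ha => Finset.sum_congr rfl fun b hb =>
      Finset.sum_congr rfl fun c hc => ?_
    exact key_alg _ _ _ (hpos a ha) (hpos b hb) (hpos c hc)
  have pull : ∀ (r : ℝ) (f : ℕ → ℕ → ℕ → ℝ),
      (∑ a ∈ I, ∑ b ∈ I, ∑ c ∈ I, r * f a b c)
        = r * ∑ a ∈ I, ∑ b ∈ I, ∑ c ∈ I, f a b c := by
    intro r f
    simp [Finset.mul_sum]
  rw [step]
  simp only [Finset.sum_sub_distrib, Finset.sum_add_distrib]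
  rw [pull (1/2) (fun a b c => (1:ℝ)/a * (1/b) * (1/c)),
      pull (1/2) (fun a b c => (1:ℝ) / ((b:ℝ) * (a + b) * (b + c))),
      pull (1/2) (fun a b c => (1:ℝ) / ((c:ℝ) * (b + c) * (c + a))),
      pull (1/2) (fun a b c => (1:ℝ) / ((a:ℝ) * (c + a) * (a + b)))]
  rw [cube]
  have e2 : (∑ a ∈ I, ∑ b ∈ I, ∑ c ∈ I, (1:ℝ) / ((c:ℝ) * (b + c) * (c + a)))
      = ∑ a ∈ I, ∑ b ∈ I, ∑ c ∈ I, (1:ℝ) / ((b:ℝ) * (a + b) * (b + c)) := by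
    rw [← cyc (fun a b c => (1:ℝ) / ((b:ℝ) * (a + b) * (b + c)))]
  have e3 : (∑ a ∈ I, ∑ b ∈ I, ∑ c ∈ I, (1:ℝ) / ((a:ℝ) * (c + a) * (a + b)))
      = ∑ a ∈ I, ∑ b ∈ I, ∑ c ∈ I, (1:ℝ) / ((b:ℝ) * (a + b) * (b + c)) := by
    rw [← cyc (fun a b c => (1:ℝ) / ((a:ℝ) * (c + a) * (a + b)))]
  rw [e2, e3]
  set X := ∑ a ∈ I, ∑ b ∈ I, ∑ c ∈ I, (1:ℝ)/a * (1/b) * (1/c) with hX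
  set Y := ∑ a ∈ I, ∑ b ∈ I, ∑ c ∈ I, (1:ℝ) / ((b:ℝ) * (a + b) * (b + c)) with hY
  ring
end

section
/- For every integer k ≥ 1, the triple integral over [1, k+1]³ of 1/((x+y)(y+z)(z+x)) equals (1/2)·(log(k+1))³ − (3/2)·∫₁^{k+1} (log((k+1+y)/(1+y)))²·dy/y. -/
open MeasureTheory intervalIntegral Real Set

lemma my_swap {b : ℝ} (hb : (1:ℝ) ≤ b) (h : ℝ → ℝ → ℝ)
    (hc : ContinuousOn (fun p : ℝ × ℝ => h p.1 p.2) (Icc 1 b ×ˢ Icc 1 b)) :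
    ∫ x in (1:ℝ)..b, ∫ y in (1:ℝ)..b, h x y = ∫ y in (1:ℝ)..b, ∫ x in (1:ℝ)..b, h x y := by
  have hi : Integrable (Function.uncurry h)
      ((volume.restrict (Ioc (1:ℝ) b)).prod (volume.restrict (Ioc (1:ℝ) b))) := by
    rw [Measure.prod_restrict]
    exact (hc.integrableOn_compact (isCompact_Icc.prod isCompact_Icc)).mono_set
      (Set.prod_mono Ioc_subset_Icc_self Ioc_subset_Icc_self)
  simp only [intervalIntegral.integral_of_le hb]
  exact integral_integral_swap hi

lemma intInv {b : ℝ} (hb : 1 ≤ b) : ∫ t in (1:ℝ)..b, t⁻¹ = Real.log b := by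
  rw [integral_inv_of_pos one_pos (by linarith), div_one]

lemma intShift {b : ℝ} (hb : 1 ≤ b) {c : ℝ} (hc : 0 ≤ c) :
    ∫ t in (1:ℝ)..b, (t + c)⁻¹ = Real.log (b + c) - Real.log (1 + c) := by
  rw [intervalIntegral.integral_comp_add_right (fun t => t⁻¹) c,
    integral_inv_of_pos (by linarith) (by linarith),
    Real.log_div (by linarith) (by linarith)]

lemma iiAux {b : ℝ} (hb : 1 ≤ b) (f g : ℝ → ℝ) (hf : ContinuousOn f (Icc 1 b))
    (hgc : ContinuousOn g (Icc 1 b)) (hg : ∀ t ∈ Icc (1:ℝ) b, g t ≠ 0) :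
    IntervalIntegrable (fun t => f t / g t) volume 1 b := by
  apply ContinuousOn.intervalIntegrable
  rw [uIcc_of_le hb]
  exact hf.div hgc hg

lemma iiInv {b : ℝ} (hb : 1 ≤ b) : IntervalIntegrable (fun z : ℝ => z⁻¹) volume 1 b := by
  apply ContinuousOn.intervalIntegrable
  rw [uIcc_of_le hb]
  exact continuousOn_id.inv₀ (fun z hz => by have := hz.1; intro h; rw [id] at h; linarith)

lemma iiShift {b : ℝ} (hb : 1 ≤ b) {c : ℝ} (hc : 0 ≤ c) :
    IntervalIntegrable (fun z : ℝ => (z + c)⁻¹) volume 1 b := by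
  apply ContinuousOn.intervalIntegrable
  rw [uIcc_of_le hb]
  exact (continuousOn_id.add continuousOn_const).inv₀
    (fun z hz => by have := hz.1; simp only [Pi.add_apply, id]; intro h; linarith)

lemma iiD {b x y : ℝ} (hb : 1 ≤ b) (hx0 : 0 < x) (hy0 : 0 < y) :
    IntervalIntegrable (fun z : ℝ => 1/(z*(z+x)*(z+y))) volume 1 b := by
  apply iiAux hb _ _ continuousOn_const (by fun_prop)
  intro z hz
  have hz0 : (0:ℝ) < z := by linarith [hz.1]
  positivity

lemma logCont {b : ℝ} (hb : 1 ≤ b) :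
    ContinuousOn (fun y : ℝ => Real.log (b+y) - Real.log (1+y)) (Icc 1 b) := by
  apply ContinuousOn.sub
  · exact (continuous_const.add continuous_id).continuousOn.log
      (fun y hy => by have := hy.1; intro h; simp only [Pi.add_apply, id] at h; linarith)
  · exact (continuous_const.add continuous_id).continuousOn.log
      (fun y hy => by have := hy.1; intro h; simp only [Pi.add_apply, id] at h; linarith)

lemma innerD {b x z : ℝ} (hb : 1 ≤ b) (hx0 : 0 < x) (hz1 : 1 ≤ z) :
    ∫ y in (1:ℝ)..b, 1/(z*(z+x)*(z+y))
      = (Real.log (b+z) - Real.log (1+z))/(z*(x+z)) := by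
  have hz0 : (0:ℝ) < z := by linarith
  have h1 : ∫ y in (1:ℝ)..b, 1/(z*(z+x)*(z+y))
      = ∫ y in (1:ℝ)..b, (1/(z*(z+x)))*(y+z)⁻¹ := by
    apply intervalIntegral.integral_congr
    intro y hy
    rw [uIcc_of_le hb] at hy
    have hy0 : (0:ℝ) < y := by linarith [hy.1]
    dsimp only
    field_simp
    ring
  rw [h1, intervalIntegral.integral_const_mul, intShift hb hz0.le,
    one_div, inv_mul_eq_div, show z*(z+x) = z*(x+z) from by ring]

lemma inner_z {b x y : ℝ} (hb : 1 ≤ b) (hx : 1 ≤ x) (hy : 1 ≤ y) :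
    ∫ z in (1:ℝ)..b, 1/((x+y)*(y+z)*(z+x))
      = (1/2)*(Real.log b/(x*y) - (Real.log (b+x) - Real.log (1+x))/(x*(x+y))
        - (Real.log (b+y) - Real.log (1+y))/(y*(x+y))
        - ∫ z in (1:ℝ)..b, 1/(z*(z+x)*(z+y))) := by
  have hx0 : (0:ℝ) < x := by linarith
  have hy0 : (0:ℝ) < y := by linarith
  have h1 : ∫ z in (1:ℝ)..b, 1/((x+y)*(y+z)*(z+x))
      = ∫ z in (1:ℝ)..b, (1/2)*((1/(x*y))*z⁻¹ - (1/(x*(x+y)))*(z+x)⁻¹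
          - (1/(y*(x+y)))*(z+y)⁻¹ - 1/(z*(z+x)*(z+y))) := by
    apply intervalIntegral.integral_congr
    intro z hz
    rw [uIcc_of_le hb] at hz
    have hz0 : (0:ℝ) < z := by linarith [hz.1]
    dsimp only
    field_simp
    ring
  have iA : IntervalIntegrable (fun z : ℝ => (1/(x*y))*z⁻¹) volume 1 b :=
    (iiInv hb).const_mul _
  have iB : IntervalIntegrable (fun z : ℝ => (1/(x*(x+y)))*(z+x)⁻¹) volume 1 b :=
    (iiShift hb hx0.le).const_mul _
  have iC : IntervalIntegrable (fun z : ℝ => (1/(y*(x+y)))*(z+y)⁻¹) volume 1 b :=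
    (iiShift hb hy0.le).const_mul _
  have iD : IntervalIntegrable (fun z : ℝ => 1/(z*(z+x)*(z+y))) volume 1 b :=
    iiD hb hx0 hy0
  rw [h1, intervalIntegral.integral_const_mul,
    intervalIntegral.integral_sub ((iA.sub iB).sub iC) iD,
    intervalIntegral.integral_sub (iA.sub iB) iC,
    intervalIntegral.integral_sub iA iB,
    intervalIntegral.integral_const_mul, intervalIntegral.integral_const_mul,
    intervalIntegral.integral_const_mul,
    intInv hb, intShift hb hx0.le, intShift hb hy0.le]
  ring

lemma middle {b x : ℝ} (hb : 1 ≤ b) (hx : 1 ≤ x) :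
    ∫ y in (1:ℝ)..b, ∫ z in (1:ℝ)..b, 1/((x+y)*(y+z)*(z+x))
      = (1/2)*((Real.log b)^2/x - (Real.log (b+x) - Real.log (1+x))^2/x
        - 2 * ∫ y in (1:ℝ)..b, (Real.log (b+y) - Real.log (1+y))/(y*(x+y))) := by
  have hx0 : (0:ℝ) < x := by linarith
  have h1 : ∫ y in (1:ℝ)..b, ∫ z in (1:ℝ)..b, 1/((x+y)*(y+z)*(z+x))
      = ∫ y in (1:ℝ)..b, (1/2)*(Real.log b/(x*y)
          - (Real.log (b+x) - Real.log (1+x))/(x*(x+y))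
          - (Real.log (b+y) - Real.log (1+y))/(y*(x+y))
          - ∫ z in (1:ℝ)..b, 1/(z*(z+x)*(z+y))) := by
    apply intervalIntegral.integral_congr
    intro y hy
    rw [uIcc_of_le hb] at hy
    exact inner_z hb hx hy.1
  have iA : IntervalIntegrable (fun y : ℝ => Real.log b/(x*y)) volume 1 b := by
    apply iiAux hb _ _ continuousOn_const (by fun_prop)
    intro y hy
    have hy0 : (0:ℝ) < y := by linarith [hy.1]
    positivity
  have iB : IntervalIntegrable
      (fun y : ℝ => (Real.log (b+x) - Real.log (1+x))/(x*(x+y))) volume 1 b := by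
    apply iiAux hb _ _ continuousOn_const (by fun_prop)
    intro y hy
    have hy0 : (0:ℝ) < y := by linarith [hy.1]
    positivity
  have iC : IntervalIntegrable
      (fun y : ℝ => (Real.log (b+y) - Real.log (1+y))/(y*(x+y))) volume 1 b := by
    apply iiAux hb _ _ (logCont hb) (by fun_prop)
    intro y hy
    have hy0 : (0:ℝ) < y := by linarith [hy.1]
    positivity
  have iJ : IntervalIntegrable
      (fun y : ℝ => ∫ z in (1:ℝ)..b, 1/(z*(z+x)*(z+y))) volume 1 b := by
    apply AntitoneOn.intervalIntegrable
    rw [uIcc_of_le hb]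
    intro y1 h1 y2 h2 h12
    have hy10 : (0:ℝ) < y1 := by linarith [h1.1]
    have hy20 : (0:ℝ) < y2 := by linarith [h2.1]
    apply intervalIntegral.integral_mono_on hb (iiD hb hx0 hy20) (iiD hb hx0 hy10)
    intro z hz
    have hz0 : (0:ℝ) < z := by linarith [hz.1]
    apply one_div_le_one_div_of_le (by positivity)
    exact mul_le_mul_of_nonneg_left (by linarith) (by positivity)
  have hJ : ∫ y in (1:ℝ)..b, ∫ z in (1:ℝ)..b, 1/(z*(z+x)*(z+y))
      = ∫ y in (1:ℝ)..b, (Real.log (b+y) - Real.log (1+y))/(y*(x+y)) := by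
    rw [my_swap hb (fun y z => 1/(z*(z+x)*(z+y)))]
    · apply intervalIntegral.integral_congr
      intro z hz
      rw [uIcc_of_le hb] at hz
      exact innerD hb hx0 hz.1
    · apply ContinuousOn.div continuousOn_const (by fun_prop)
      intro p hp
      have h1 : (1:ℝ) ≤ p.1 := (mem_prod.mp hp).1.1
      have h2 : (1:ℝ) ≤ p.2 := (mem_prod.mp hp).2.1
      have hp1 : (0:ℝ) < p.1 := by linarith
      have hp2 : (0:ℝ) < p.2 := by linarith
      positivity
  rw [h1, intervalIntegral.integral_const_mul,
    intervalIntegral.integral_sub ((iA.sub iB).sub iC) iJ,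
    intervalIntegral.integral_sub (iA.sub iB) iC,
    intervalIntegral.integral_sub iA iB, hJ]
  have hA : ∫ y in (1:ℝ)..b, Real.log b/(x*y) = (Real.log b)^2/x := by
    have : ∫ y in (1:ℝ)..b, Real.log b/(x*y)
        = ∫ y in (1:ℝ)..b, (Real.log b/x)*y⁻¹ := by
      apply intervalIntegral.integral_congr
      intro y hy
      rw [uIcc_of_le hb] at hy
      have hy0 : (0:ℝ) < y := by linarith [hy.1]
      dsimp only
      field_simp
    rw [this, intervalIntegral.integral_const_mul, intInv hb]
    ring
  have hB : ∫ y in (1:ℝ)..b, (Real.log (b+x) - Real.log (1+x))/(x*(x+y))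
      = (Real.log (b+x) - Real.log (1+x))^2/x := by
    have : ∫ y in (1:ℝ)..b, (Real.log (b+x) - Real.log (1+x))/(x*(x+y))
        = ∫ y in (1:ℝ)..b, ((Real.log (b+x) - Real.log (1+x))/x)*(y+x)⁻¹ := by
      apply intervalIntegral.integral_congr
      intro y hy
      rw [uIcc_of_le hb] at hy
      have hy0 : (0:ℝ) < y := by linarith [hy.1]
      dsimp only
      rw [show x*(x+y) = x*(y+x) from by ring, ← div_div, div_eq_mul_inv]
    rw [this, intervalIntegral.integral_const_mul, intShift hb hx0.le]
    ring
  rw [hA, hB]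
  ring

lemma iiC {b x : ℝ} (hb : 1 ≤ b) (hx0 : 0 < x) :
    IntervalIntegrable (fun y : ℝ => (Real.log (b+y) - Real.log (1+y))/(y*(x+y)))
      volume 1 b := by
  apply iiAux hb _ _ (logCont hb) (by fun_prop)
  intro y hy
  have hy0 : (0:ℝ) < y := by linarith [hy.1]
  positivity

lemma innerN {b y : ℝ} (hb : 1 ≤ b) (hy1 : 1 ≤ y) :
    ∫ x in (1:ℝ)..b, (Real.log (b+y) - Real.log (1+y))/(y*(x+y))
      = (Real.log (b+y) - Real.log (1+y))^2/y := by
  have hy0 : (0:ℝ) < y := by linarith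
  have h1 : ∫ x in (1:ℝ)..b, (Real.log (b+y) - Real.log (1+y))/(y*(x+y))
      = ∫ x in (1:ℝ)..b, ((Real.log (b+y) - Real.log (1+y))/y)*(x+y)⁻¹ := by
    apply intervalIntegral.integral_congr
    intro x hx
    dsimp only
    rw [← div_div, div_eq_mul_inv]
  rw [h1, intervalIntegral.integral_const_mul, intShift hb hy0.le]
  ring

lemma main {b : ℝ} (hb : 1 ≤ b) :
    ∫ x in (1:ℝ)..b, ∫ y in (1:ℝ)..b, ∫ z in (1:ℝ)..b, 1/((x+y)*(y+z)*(z+x))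
      = (1/2)*(Real.log b)^3
        - (3/2)*∫ y in (1:ℝ)..b, (Real.log ((b+y)/(1+y)))^2/y := by
  have h1 : ∫ x in (1:ℝ)..b, ∫ y in (1:ℝ)..b, ∫ z in (1:ℝ)..b, 1/((x+y)*(y+z)*(z+x))
      = ∫ x in (1:ℝ)..b, (1/2)*((Real.log b)^2/x
          - (Real.log (b+x) - Real.log (1+x))^2/x
          - 2 * ∫ y in (1:ℝ)..b, (Real.log (b+y) - Real.log (1+y))/(y*(x+y))) := by
    apply intervalIntegral.integral_congr
    intro x hx
    rw [uIcc_of_le hb] at hx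
    exact middle hb hx.1
  have iA : IntervalIntegrable (fun x : ℝ => (Real.log b)^2/x) volume 1 b := by
    apply iiAux hb _ _ continuousOn_const continuousOn_id
    intro x hx
    have : (0:ℝ) < x := by linarith [hx.1]
    positivity
  have iB : IntervalIntegrable
      (fun x : ℝ => (Real.log (b+x) - Real.log (1+x))^2/x) volume 1 b := by
    apply iiAux hb _ _ ((logCont hb).pow 2) continuousOn_id
    intro x hx
    have : (0:ℝ) < x := by linarith [hx.1]
    positivity
  have iN : IntervalIntegrable
      (fun x : ℝ => ∫ y in (1:ℝ)..b, (Real.log (b+y) - Real.log (1+y))/(y*(x+y)))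
      volume 1 b := by
    apply AntitoneOn.intervalIntegrable
    rw [uIcc_of_le hb]
    intro x1 h1 x2 h2 h12
    have hx10 : (0:ℝ) < x1 := by linarith [h1.1]
    have hx20 : (0:ℝ) < x2 := by linarith [h2.1]
    apply intervalIntegral.integral_mono_on hb (iiC hb hx20) (iiC hb hx10)
    intro y hy
    have hy0 : (0:ℝ) < y := by linarith [hy.1]
    have hnum : 0 ≤ Real.log (b+y) - Real.log (1+y) := by
      have : Real.log (1+y) ≤ Real.log (b+y) := by
        apply Real.log_le_log (by positivity) (by linarith)
      linarith
    apply div_le_div_of_nonneg_left hnum (by positivity)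
    exact mul_le_mul_of_nonneg_left (by linarith) (by positivity)
  have hN : ∫ x in (1:ℝ)..b,
        (∫ y in (1:ℝ)..b, (Real.log (b+y) - Real.log (1+y))/(y*(x+y)))
      = ∫ y in (1:ℝ)..b, (Real.log (b+y) - Real.log (1+y))^2/y := by
    rw [my_swap hb (fun x y => (Real.log (b+y) - Real.log (1+y))/(y*(x+y)))]
    · apply intervalIntegral.integral_congr
      intro y hy
      rw [uIcc_of_le hb] at hy
      exact innerN hb hy.1
    · apply ContinuousOn.div
      · apply ContinuousOn.sub
        · apply ContinuousOn.log (by fun_prop)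
          intro p hp
          have h2 : (1:ℝ) ≤ p.2 := (mem_prod.mp hp).2.1
          intro h; linarith
        · apply ContinuousOn.log (by fun_prop)
          intro p hp
          have h2 : (1:ℝ) ≤ p.2 := (mem_prod.mp hp).2.1
          intro h; linarith
      · fun_prop
      · intro p hp
        have h1 : (1:ℝ) ≤ p.1 := (mem_prod.mp hp).1.1
        have h2 : (1:ℝ) ≤ p.2 := (mem_prod.mp hp).2.1
        have hp1 : (0:ℝ) < p.1 := by linarith
        have hp2 : (0:ℝ) < p.2 := by linarith
        positivity
  have hA : ∫ x in (1:ℝ)..b, (Real.log b)^2/x = (Real.log b)^3 := by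
    have : ∫ x in (1:ℝ)..b, (Real.log b)^2/x
        = ∫ x in (1:ℝ)..b, (Real.log b)^2*x⁻¹ := by
      apply intervalIntegral.integral_congr
      intro x hx
      dsimp only
      rw [div_eq_mul_inv]
    rw [this, intervalIntegral.integral_const_mul, intInv hb]
    ring
  have hW : ∫ y in (1:ℝ)..b, (Real.log (b+y) - Real.log (1+y))^2/y
      = ∫ y in (1:ℝ)..b, (Real.log ((b+y)/(1+y)))^2/y := by
    apply intervalIntegral.integral_congr
    intro y hy
    rw [uIcc_of_le hb] at hy
    have hy0 : (0:ℝ) < y := by linarith [hy.1]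
    dsimp only
    rw [Real.log_div (by linarith) (by linarith)]
  rw [h1, intervalIntegral.integral_const_mul,
    intervalIntegral.integral_sub (iA.sub iB) (iN.const_mul 2),
    intervalIntegral.integral_sub iA iB,
    intervalIntegral.integral_const_mul, hN, hA]
  rw [hW]
  ring

theorem triple_integral_reduction (k : ℕ) (hk : 1 ≤ k) :
    ∫ x in (1:ℝ)..(k + 1), ∫ y in (1:ℝ)..(k + 1), ∫ z in (1:ℝ)..(k + 1),
        1 / ((x + y) * (y + z) * (z + x))
      = (1 / 2) * (Real.log ((k : ℝ) + 1)) ^ 3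
        - (3 / 2) * ∫ y in (1:ℝ)..(k + 1),
            (Real.log (((k : ℝ) + 1 + y) / (1 + y))) ^ 2 / y := by
  have hb : (1:ℝ) ≤ (k:ℝ) + 1 := by
    have : (0:ℝ) ≤ (k:ℝ) := Nat.cast_nonneg k
    linarith
  exact main hb
end
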